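/- arXiv:2111.12974 — 5 statements merged into one kernel-verified Lean document; each statement's English description precedes it below -/
import Mathlib

section
/- Let b ≥ 1 be an integer, β = (−b + √(b²+4))/2, and let p_n/q_n be the continued fraction convergents of β (q_0 = 1, q_1 = b, q_{n+1} = b q_n + q_{n−1}, and p_n = q_{n−1}). Then for all n ≥ 1, β = q_{n−1}/q_n + (−1)^n β^{n+1}/q_n. -/
open Real

theorem beta_convergent_identity (b : ℕ) (hb : 1 ≤ b)
    (β : ℝ) (hβ : β = (-(b : ℝ) + Real.sqrt ((b : ℝ) ^ 2 + 4)) / 2)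
    (q : ℕ → ℕ) (h0 : q 0 = 1) (h1 : q 1 = b)
    (hrec : ∀ n : ℕ, q (n + 2) = b * q (n + 1) + q n) :
    ∀ n : ℕ, 1 ≤ n →
      β = (q (n - 1) : ℝ) / (q n : ℝ) + (-1) ^ n * β ^ (n + 1) / (q n : ℝ) := by
  have hsq : Real.sqrt ((b : ℝ) ^ 2 + 4) ^ 2 = (b : ℝ) ^ 2 + 4 := by
    rw [Real.sq_sqrt]; positivity
  have hkey : β ^ 2 = 1 - (b : ℝ) * β := by
    rw [hβ]; nlinarith [hsq]
  have hpos : ∀ n, 1 ≤ q n := by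
    intro n
    induction n using Nat.strong_induction_on with
    | _ n ih =>
      match n with
      | 0 => omega
      | 1 => omega
      | (m + 2) =>
        have := ih m (by omega)
        rw [hrec m]; nlinarith
  have aux : ∀ n, β * q (n + 1) = q n + (-1) ^ (n + 1) * β ^ (n + 2) ∧
      β * q (n + 2) = q (n + 1) + (-1) ^ (n + 2) * β ^ (n + 3) := by
    intro n
    induction n with
    | zero =>
      constructor
      · rw [h1, h0]; push_cast; nlinarith
      · rw [hrec 0, h1, h0]; push_cast
        linear_combination ((b : ℝ) - β) * hkey
    | succ m ih =>
      obtain ⟨ih1, ih2⟩ := ih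
      refine ⟨ih2, ?_⟩
      have hr : ((q (m + 3) : ℝ)) = b * q (m + 2) + q (m + 1) := by
        rw [hrec (m + 1)]; push_cast; ring
      have : β * q (m + 3) = b * (β * q (m + 2)) + β * q (m + 1) := by
        rw [hr]; ring
      rw [this, ih1, ih2]
      have hb3 : β ^ (m + 4) = β ^ (m + 2) - b * β ^ (m + 3) := by
        have : β ^ (m + 4) = β ^ (m + 2) * β ^ 2 := by ring
        rw [this, hkey]; ring
      have hr2 : ((q (m + 2) : ℝ)) = b * q (m + 1) + q m := by
        rw [hrec m]; push_cast; ring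
      rw [hb3, hr2]; ring
  intro n hn
  obtain ⟨m, rfl⟩ : ∃ m, n = m + 1 := ⟨n - 1, by omega⟩
  have h := (aux m).1
  have hq : (q (m + 1) : ℝ) ≠ 0 := by
    have := hpos (m + 1); positivity
  simp only [Nat.add_sub_cancel]
  field_simp
  linarith [h]
end

section
/- Let (a_n) be real numbers with |a_n| ≤ 1/2 and |a_n| ≤ C/n for all n, and let 2 ≤ N ≤ M be integers. Then ∏_{n=N}^{M} (1 + a_n) ≥ 1 − (|∑_{n=N}^{M} a_n| + C²/(N−1)). -/
open Finset Real

private lemma lemA (x : ℝ) (hx : |x| ≤ 1 / 2) : Real.exp x * (1 - x ^ 2) ≤ 1 + x := by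
  have h0 : 0 ≤ 1 + x := by
    have := abs_le.mp hx; linarith [this.1]
  have h1 : 1 - x ≤ Real.exp (-x) := by
    have := Real.add_one_le_exp (-x); linarith
  have h2 : Real.exp x * (1 - x) ≤ 1 := by
    calc Real.exp x * (1 - x) ≤ Real.exp x * Real.exp (-x) :=
          mul_le_mul_of_nonneg_left h1 (Real.exp_pos x).le
      _ = 1 := by rw [← Real.exp_add]; simp
  nlinarith [mul_le_mul_of_nonneg_right h2 h0]

private lemma prod_one_sub_ge (s : Finset ℕ) (b : ℕ → ℝ)
    (hb : ∀ n ∈ s, 0 ≤ b n ∧ b n ≤ 1) :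
    1 - ∑ n ∈ s, b n ≤ ∏ n ∈ s, (1 - b n) := by
  induction s using Finset.cons_induction with
  | empty => simp
  | cons x s hx ih =>
    rw [Finset.sum_cons, Finset.prod_cons]
    have hbx := hb x (Finset.mem_cons_self x s)
    have ih' := ih (fun n hn => hb n (Finset.mem_cons_of_mem hn))
    have hs : 0 ≤ ∑ n ∈ s, b n :=
      Finset.sum_nonneg fun n hn => (hb n (Finset.mem_cons_of_mem hn)).1
    have hp : 0 ≤ ∏ n ∈ s, (1 - b n) :=
      Finset.prod_nonneg fun n hn => by linarith [(hb n (Finset.mem_cons_of_mem hn)).2]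
    nlinarith [mul_le_mul_of_nonneg_left ih' (by linarith [hbx.2] : (0:ℝ) ≤ 1 - b x)]

private lemma frac_le (C x : ℝ) (hx : 2 ≤ x) : C ^ 2 / x ^ 2 ≤ C ^ 2 * (1 / (x - 1) - 1 / x) := by
  have h1 : (0:ℝ) < x - 1 := by linarith
  have h2 : (0:ℝ) < x := by linarith
  have e : 1 / (x - 1) - 1 / x = 1 / ((x - 1) * x) := by
    field_simp
    ring
  rw [e, mul_one_div, div_le_div_iff₀ (by positivity) (by nlinarith)]
  nlinarith [sq_nonneg C]

private lemma sumsq_le (a : ℕ → ℝ) (C : ℝ) (hC : 0 < C)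
    (h2 : ∀ n : ℕ, 1 ≤ n → |a n| ≤ C / n) (N M : ℕ) (hN : 2 ≤ N) (hNM : N ≤ M) :
    ∑ n ∈ Finset.Icc N M, (a n) ^ 2 ≤ C ^ 2 / (N - 1 : ℝ) := by
  have hN2 : (2:ℝ) ≤ (N:ℝ) := by exact_mod_cast hN
  have key : ∀ M, N ≤ M → ∑ n ∈ Finset.Icc N M, (a n) ^ 2 ≤
      C ^ 2 * (1 / (N - 1 : ℝ) - 1 / M) := by
    intro M hM
    induction M, hM using Nat.le_induction with
    | base =>
      rw [Finset.Icc_self, Finset.sum_singleton]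
      have ha := h2 N (by omega)
      have h : (a N) ^ 2 ≤ C ^ 2 / (N:ℝ) ^ 2 := by
        rw [← div_pow]
        nlinarith [sq_abs (a N), abs_nonneg (a N)]
      linarith [frac_le C (N:ℝ) hN2]
    | succ m hm ih =>
      rw [Finset.sum_Icc_succ_top (by omega)]
      have hm2 : (2:ℝ) ≤ (m:ℝ) := by exact_mod_cast hN.trans hm
      have ha := h2 (m+1) (by omega)
      push_cast at ha
      have h : (a (m+1)) ^ 2 ≤ C ^ 2 / ((m:ℝ)+1) ^ 2 := by
        rw [← div_pow]
        nlinarith [sq_abs (a (m+1)), abs_nonneg (a (m+1))]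
      have hf := frac_le C ((m:ℝ)+1) (by linarith)
      push_cast
      have e : ((m:ℝ) + 1) - 1 = (m:ℝ) := by ring
      rw [e] at hf
      linarith
  have hMpos : (0:ℝ) < M := by
    have : (2:ℝ) ≤ (M:ℝ) := by exact_mod_cast hN.trans hNM
    linarith
  have h1M : 0 < 1 / (M:ℝ) := by positivity
  have hle : C ^ 2 * (1 / (N - 1 : ℝ) - 1 / M) ≤ C ^ 2 * (1 / (N - 1 : ℝ)) := by
    apply mul_le_mul_of_nonneg_left _ (by positivity)
    linarith
  rw [mul_one_div] at hle
  linarith [key M hNM]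

theorem prod_one_add_ge (a : ℕ → ℝ) (C : ℝ) (hC : 0 < C)
    (h1 : ∀ n, |a n| ≤ 1 / 2) (h2 : ∀ n : ℕ, 1 ≤ n → |a n| ≤ C / n)
    (N M : ℕ) (hN : 2 ≤ N) (hNM : N ≤ M) :
    ∏ n ∈ Finset.Icc N M, (1 + a n) ≥
      1 - (|∑ n ∈ Finset.Icc N M, a n| + C ^ 2 / (N - 1 : ℝ)) := by
  set S := ∑ n ∈ Finset.Icc N M, a n with hS
  set Q := ∑ n ∈ Finset.Icc N M, (a n) ^ 2 with hQ
  have hQ0 : 0 ≤ Q := Finset.sum_nonneg fun n _ => sq_nonneg _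
  have hQC : Q ≤ C ^ 2 / (N - 1 : ℝ) := sumsq_le a C hC h2 N M hN hNM
  have step1 : Real.exp S * ∏ n ∈ Finset.Icc N M, (1 - (a n) ^ 2) ≤
      ∏ n ∈ Finset.Icc N M, (1 + a n) := by
    rw [hS, Real.exp_sum, ← Finset.prod_mul_distrib]
    apply Finset.prod_le_prod
    · intro n _
      have h := abs_le.mp (h1 n)
      have hsq : (a n) ^ 2 ≤ 1 := by nlinarith [h.1, h.2]
      have := Real.exp_pos (a n)
      nlinarith
    · intro n _
      exact lemA (a n) (h1 n)
  rcases le_or_gt 1 Q with hq1 | hq1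
  · have hpos : 0 < ∏ n ∈ Finset.Icc N M, (1 + a n) :=
      Finset.prod_pos fun n _ => by have := abs_le.mp (h1 n); linarith [this.1]
    have : 1 - (|S| + C ^ 2 / (N - 1 : ℝ)) ≤ 0 := by
      have := abs_nonneg S; linarith
    linarith
  · have step2 : 1 - Q ≤ ∏ n ∈ Finset.Icc N M, (1 - (a n) ^ 2) := by
      apply prod_one_sub_ge
      intro n _
      have h := abs_le.mp (h1 n)
      constructor
      · positivity
      · nlinarith [h.1, h.2]
    have step3 : (1 + S) * (1 - Q) ≤ Real.exp S * (1 - Q) :=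
      mul_le_mul_of_nonneg_right (by linarith [Real.add_one_le_exp S]) (by linarith)
    have hSabs : -|S| ≤ S := neg_abs_le S
    have hSabs0 : 0 ≤ |S| := abs_nonneg S
    have step4 : Real.exp S * (1 - Q) ≤ Real.exp S * ∏ n ∈ Finset.Icc N M, (1 - (a n) ^ 2) :=
      mul_le_mul_of_nonneg_left step2 (Real.exp_pos S).le
    nlinarith [step1, step3, step4]
end

section
/- Let x, y, z be real numbers with 0 < max{|y|, |z|} ≤ x < 1/2, and assume 2z² ≤ (x+y)² and ((x+y)² − z²)/x² ≥ 1/2. Then (sin²(x+y) − sin²(z))/sin²(x) ≥ (((x+y)² − z²)/x²)·(1 − (2x|y| + (4/3)y² + 6x⁶/7! + x⁵|y| + z²)). -/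
open Real

lemma mono_aux {f f' : ℝ → ℝ} (hf : ∀ t, HasDerivAt f (f' t) t)
    (h0 : 0 ≤ f 0) (hder : ∀ t, 0 ≤ t → 0 ≤ f' t) :
    ∀ t, 0 ≤ t → 0 ≤ f t := by
  intro t ht
  have hmono : MonotoneOn f (Set.Ici 0) := by
    apply monotoneOn_of_deriv_nonneg (convex_Ici 0)
    · exact Continuous.continuousOn (continuous_iff_continuousAt.2 fun s => (hf s).continuousAt)
    · intro s _
      exact ((hf s).differentiableAt).differentiableWithinAt
    · intro s hs
      rw [(hf s).deriv]
      exact hder s (le_of_lt (by simpa using hs))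
  calc 0 ≤ f 0 := h0
    _ ≤ f t := hmono (by simp) (by simpa using ht) ht

lemma pc2 : ∀ t : ℝ, 0 ≤ t → 0 ≤ Real.cos t - (1 - t^2/2) := by
  apply mono_aux (f' := fun t => t - Real.sin t)
  · intro t
    have h := (Real.hasDerivAt_cos t).sub ((hasDerivAt_const t (1:ℝ)).sub
        (((hasDerivAt_pow 2 t)).div_const 2))
    refine h.congr_deriv ?_
    push_cast
    ring
  · norm_num
  · intro t ht; linarith [Real.sin_le ht]

lemma ps3 : ∀ t : ℝ, 0 ≤ t → 0 ≤ Real.sin t - (t - t^3/6) := by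
  apply mono_aux (f' := fun t => Real.cos t - (1 - t^2/2))
  · intro t
    have h := (Real.hasDerivAt_sin t).sub ((hasDerivAt_id t).sub
        (((hasDerivAt_pow 3 t)).div_const 6))
    refine h.congr_deriv ?_
    push_cast
    ring
  · norm_num
  · exact pc2

lemma pc4 : ∀ t : ℝ, 0 ≤ t → 0 ≤ (1 - t^2/2 + t^4/24) - Real.cos t := by
  apply mono_aux (f' := fun t => Real.sin t - (t - t^3/6))
  · intro t
    have h := (((hasDerivAt_const t (1:ℝ)).sub ((hasDerivAt_pow 2 t).div_const 2)).add
        ((hasDerivAt_pow 4 t).div_const 24)).sub (Real.hasDerivAt_cos t)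
    refine h.congr_deriv ?_
    push_cast
    ring
  · norm_num
  · exact ps3

lemma ps5 : ∀ t : ℝ, 0 ≤ t → 0 ≤ (t - t^3/6 + t^5/120) - Real.sin t := by
  apply mono_aux (f' := fun t => (1 - t^2/2 + t^4/24) - Real.cos t)
  · intro t
    have h := (((hasDerivAt_id t).sub ((hasDerivAt_pow 3 t).div_const 6)).add
        ((hasDerivAt_pow 5 t).div_const 120)).sub (Real.hasDerivAt_sin t)
    refine h.congr_deriv ?_
    push_cast
    ring
  · norm_num
  · exact pc4

lemma pc6 : ∀ t : ℝ, 0 ≤ t → 0 ≤ Real.cos t - (1 - t^2/2 + t^4/24 - t^6/720) := by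
  apply mono_aux (f' := fun t => (t - t^3/6 + t^5/120) - Real.sin t)
  · intro t
    have h := (Real.hasDerivAt_cos t).sub ((((hasDerivAt_const t (1:ℝ)).sub
        ((hasDerivAt_pow 2 t).div_const 2)).add ((hasDerivAt_pow 4 t).div_const 24)).sub
        ((hasDerivAt_pow 6 t).div_const 720))
    refine h.congr_deriv ?_
    push_cast
    ring
  · norm_num
  · exact ps5

lemma ps7 : ∀ t : ℝ, 0 ≤ t → 0 ≤ Real.sin t - (t - t^3/6 + t^5/120 - t^7/5040) := by
  apply mono_aux (f' := fun t => Real.cos t - (1 - t^2/2 + t^4/24 - t^6/720))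
  · intro t
    have h := (Real.hasDerivAt_sin t).sub (((((hasDerivAt_id t).sub
        ((hasDerivAt_pow 3 t).div_const 6)).add ((hasDerivAt_pow 5 t).div_const 120)).sub
        ((hasDerivAt_pow 7 t).div_const 5040)))
    refine h.congr_deriv ?_
    push_cast
    ring
  · norm_num
  · exact pc6

lemma pc8 : ∀ t : ℝ, 0 ≤ t →
    0 ≤ (1 - t^2/2 + t^4/24 - t^6/720 + t^8/40320) - Real.cos t := by
  apply mono_aux (f' := fun t => Real.sin t - (t - t^3/6 + t^5/120 - t^7/5040))
  · intro t
    have h := (((((hasDerivAt_const t (1:ℝ)).sub ((hasDerivAt_pow 2 t).div_const 2)).add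
        ((hasDerivAt_pow 4 t).div_const 24)).sub ((hasDerivAt_pow 6 t).div_const 720)).add
        ((hasDerivAt_pow 8 t).div_const 40320)).sub (Real.hasDerivAt_cos t)
    refine h.congr_deriv ?_
    push_cast
    ring
  · norm_num
  · exact ps7

lemma ps9 : ∀ t : ℝ, 0 ≤ t →
    0 ≤ (t - t^3/6 + t^5/120 - t^7/5040 + t^9/362880) - Real.sin t := by
  apply mono_aux (f' := fun t => (1 - t^2/2 + t^4/24 - t^6/720 + t^8/40320) - Real.cos t)
  · intro t
    have h := ((((((hasDerivAt_id t).sub ((hasDerivAt_pow 3 t).div_const 6)).add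
        ((hasDerivAt_pow 5 t).div_const 120)).sub ((hasDerivAt_pow 7 t).div_const 5040)).add
        ((hasDerivAt_pow 9 t).div_const 362880))).sub (Real.hasDerivAt_sin t)
    refine h.congr_deriv ?_
    push_cast
    ring
  · norm_num
  · exact pc8

lemma pc10 : ∀ t : ℝ, 0 ≤ t →
    0 ≤ Real.cos t - (1 - t^2/2 + t^4/24 - t^6/720 + t^8/40320 - t^10/3628800) := by
  apply mono_aux (f' := fun t => (t - t^3/6 + t^5/120 - t^7/5040 + t^9/362880) - Real.sin t)
  · intro t
    have h := (Real.hasDerivAt_cos t).sub ((((((hasDerivAt_const t (1:ℝ)).sub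
        ((hasDerivAt_pow 2 t).div_const 2)).add ((hasDerivAt_pow 4 t).div_const 24)).sub
        ((hasDerivAt_pow 6 t).div_const 720)).add ((hasDerivAt_pow 8 t).div_const 40320)).sub
        ((hasDerivAt_pow 10 t).div_const 3628800))
    refine h.congr_deriv ?_
    push_cast
    ring
  · norm_num
  · exact ps9

lemma c6' (t : ℝ) : 1 - t^2/2 + t^4/24 - t^6/720 ≤ Real.cos t := by
  rcases le_total 0 t with h | h
  · linarith [pc6 t h]
  · have h2 := pc6 (-t) (by linarith)
    rw [Real.cos_neg] at h2
    nlinarith [h2]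

lemma c8' (t : ℝ) : Real.cos t ≤ 1 - t^2/2 + t^4/24 - t^6/720 + t^8/40320 := by
  rcases le_total 0 t with h | h
  · linarith [pc8 t h]
  · have h2 := pc8 (-t) (by linarith)
    rw [Real.cos_neg] at h2
    nlinarith [h2]

lemma c10' (t : ℝ) : 1 - t^2/2 + t^4/24 - t^6/720 + t^8/40320 - t^10/3628800 ≤ Real.cos t := by
  rcases le_total 0 t with h | h
  · linarith [pc10 t h]
  · have h2 := pc10 (-t) (by linarith)
    rw [Real.cos_neg] at h2
    nlinarith [h2]
open Real

set_option maxHeartbeats 1000000 in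
lemma N_nonneg_aux (x y z : ℝ) (hx0 : 0 < x) (hx : x < 1 / 2)
    (hA0 : 0 ≤ x + y) (hA1 : x + y ≤ 1) (hzx2 : z ^ 2 ≤ x ^ 2)
    (h1 : 2 * z ^ 2 ≤ (x + y) ^ 2) (hSpos : 0 < (x + y) ^ 2 - z ^ 2) :
    0 ≤ 2 * ((x + y) ^ 2 - z ^ 2) - 2 / 3 * ((x + y) ^ 4 - z ^ 4)
      + 4 / 45 * ((x + y) ^ 6 - z ^ 6) - 2 / 315 * (x + y) ^ 8 := by
  have hA2 : (x + y) ^ 2 ≤ 1 := by nlinarith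
  have hA6 : (x + y) ^ 6 ≤ 1 := by nlinarith [pow_nonneg hA0 2, pow_nonneg hA0 4]
  have hz14 : z ^ 2 ≤ 1 / 4 := by nlinarith
  have hM : 7 / 6 ≤ 2 - 2 / 3 * ((x + y) ^ 2 + z ^ 2)
      + 4 / 45 * ((x + y) ^ 4 + (x + y) ^ 2 * z ^ 2 + z ^ 4) := by
    nlinarith [pow_nonneg hA0 4, mul_nonneg (sq_nonneg (x + y)) (sq_nonneg z), sq_nonneg (z ^ 2)]
  nlinarith [mul_nonneg hSpos.le (by linarith : (0:ℝ) ≤ 2 - 2 / 3 * ((x + y) ^ 2 + z ^ 2)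
      + 4 / 45 * ((x + y) ^ 4 + (x + y) ^ 2 * z ^ 2 + z ^ 4) - 7 / 6),
    mul_nonneg (sq_nonneg (x + y)) (by linarith : (0:ℝ) ≤ 1 - (x + y) ^ 6), h1]

set_option maxHeartbeats 4000000 in
lemma key_poly_aux (x y z Y : ℝ) (hx0 : 0 < x) (hx : x < 1 / 2) (hY0 : 0 ≤ Y)
    (hYy : y ≤ Y) (hYy' : -Y ≤ y) (hYx : Y ≤ x) (hzx2 : z ^ 2 ≤ x ^ 2)
    (h1 : 2 * z ^ 2 ≤ (x + y) ^ 2) (hSpos : 0 < (x + y) ^ 2 - z ^ 2)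
    (hYeq : Y ^ 2 = y ^ 2) :
    2 * ((x + y) ^ 2 - z ^ 2)
        * (1 - (2 * x * Y + 4 / 3 * y ^ 2 + 6 * x ^ 6 / 5040 + x ^ 5 * Y + z ^ 2))
        * (1 - x ^ 2 / 3 + 2 / 45 * x ^ 4 - 1 / 315 * x ^ 6 + 2 / 14175 * x ^ 8)
      ≤ 2 * ((x + y) ^ 2 - z ^ 2) - 2 / 3 * ((x + y) ^ 4 - z ^ 4)
        + 4 / 45 * ((x + y) ^ 6 - z ^ 6) - 2 / 315 * (x + y) ^ 8 := by
  have hA0 : 0 ≤ x + y := by linarith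
  have hA1 : x + y ≤ 1 := by linarith
  have hA2 : (x + y) ^ 2 ≤ 1 := by nlinarith
  have hA41 : (x + y) ^ 4 ≤ 1 := by nlinarith [pow_nonneg hA0 2]
  have hE0 : 0 ≤ 2 * x * Y + 4 / 3 * y ^ 2 + 6 * x ^ 6 / 5040 + x ^ 5 * Y + z ^ 2 := by
    have h1' : 0 ≤ 2 * x * Y := by positivity
    have h2' : 0 ≤ x ^ 5 * Y := by positivity
    positivity
  have hK1 : (11 : ℝ) / 12 ≤ 1 - x ^ 2 / 3 + 2 / 45 * x ^ 4 - 1 / 315 * x ^ 6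
      + 2 / 14175 * x ^ 8 := by
    nlinarith [sq_nonneg x, pow_nonneg hx0.le 4, pow_nonneg hx0.le 6, pow_nonneg hx0.le 8]
  have hGz : 0 ≤ z ^ 2 * (7 / 6) + 4 / 45 * (x + y) ^ 2 * z ^ 2 + 4 / 45 * z ^ 4
      - 4 / 315 * (x + y) ^ 4 * z ^ 2 := by
    nlinarith [mul_nonneg (sq_nonneg z) (sub_nonneg.mpr hA41),
      mul_nonneg (sq_nonneg (x + y)) (sq_nonneg z), sq_nonneg (z ^ 2)]
  have hB1 : -2 / 3 + 4 / 45 * ((x + y) ^ 2 + x ^ 2)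
      - 2 / 315 * ((x + y) ^ 4 + (x + y) ^ 2 * x ^ 2 + x ^ 4) ≤ 0 := by
    nlinarith [sq_nonneg (x + y), sq_nonneg x, pow_nonneg hA0 4, pow_nonneg hx0.le 4,
      mul_nonneg (sq_nonneg (x + y)) (sq_nonneg x)]
  have hx2q : x ^ 2 ≤ 1 / 4 := by nlinarith
  have hx4 : x ^ 4 ≤ 1 / 16 := by nlinarith [sq_nonneg x]
  have hA2x2 : (x + y) ^ 2 * x ^ 2 ≤ 1 / 4 := by
    nlinarith [sq_nonneg x, mul_nonneg (sq_nonneg (x + y)) (sq_nonneg x)]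
  have hB2 : -(17 : ℝ) / 25 ≤ -2 / 3 + 4 / 45 * ((x + y) ^ 2 + x ^ 2)
      - 2 / 315 * ((x + y) ^ 4 + (x + y) ^ 2 * x ^ 2 + x ^ 4) := by
    nlinarith [hA41, hA2x2, hx4, sq_nonneg (x + y), sq_nonneg x]
  have hd1 : (x + y) ^ 2 - x ^ 2 ≤ 2 * x * Y + Y ^ 2 := by nlinarith
  have hd2 : -(2 * x * Y + Y ^ 2) ≤ (x + y) ^ 2 - x ^ 2 := by nlinarith
  have hGd : 0 ≤ 11 / 6 * (2 * x * Y + 4 / 3 * y ^ 2 + x ^ 5 * Y)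
      + ((x + y) ^ 2 - x ^ 2) * (-2 / 3 + 4 / 45 * ((x + y) ^ 2 + x ^ 2)
        - 2 / 315 * ((x + y) ^ 4 + (x + y) ^ 2 * x ^ 2 + x ^ 4)) := by
    nlinarith [mul_nonneg (by linarith : (0 : ℝ) ≤ 2 * x * Y + Y ^ 2 - ((x + y) ^ 2 - x ^ 2))
        (by linarith : (0 : ℝ) ≤ -(-2 / 3 + 4 / 45 * ((x + y) ^ 2 + x ^ 2)
          - 2 / 315 * ((x + y) ^ 4 + (x + y) ^ 2 * x ^ 2 + x ^ 4))),
      mul_nonneg (by nlinarith : (0 : ℝ) ≤ 2 * x * Y + Y ^ 2)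
        (by linarith : (0 : ℝ) ≤ 17 / 25 + (-2 / 3 + 4 / 45 * ((x + y) ^ 2 + x ^ 2)
          - 2 / 315 * ((x + y) ^ 4 + (x + y) ^ 2 * x ^ 2 + x ^ 4))),
      mul_nonneg (pow_nonneg hx0.le 5) hY0, mul_nonneg hx0.le hY0, hYeq]
  have hGx : 0 ≤ 11 / 5040 * x ^ 6 - 4 / 14175 * x ^ 8 := by
    nlinarith [mul_nonneg (pow_nonneg hx0.le 6) (by linarith : (0:ℝ) ≤ 1 / 4 - x ^ 2),
      pow_nonneg hx0.le 6]
  have hFQ : 0 ≤ (2 - 2 / 3 * ((x + y) ^ 2 + z ^ 2)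
        + 4 / 45 * ((x + y) ^ 4 + (x + y) ^ 2 * z ^ 2 + z ^ 4))
      - 2 * (1 - x ^ 2 / 3 + 2 / 45 * x ^ 4 - 1 / 315 * x ^ 6 + 2 / 14175 * x ^ 8)
      + 11 / 6 * (2 * x * Y + 4 / 3 * y ^ 2 + 6 * x ^ 6 / 5040 + x ^ 5 * Y + z ^ 2)
      - 2 / 315 * (x + y) ^ 6 - 4 / 315 * (x + y) ^ 4 * z ^ 2 := by
    linarith [hGz, hGd, hGx]
  have hbr : 0 ≤ (2 - 2 / 3 * ((x + y) ^ 2 + z ^ 2)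
        + 4 / 45 * ((x + y) ^ 4 + (x + y) ^ 2 * z ^ 2 + z ^ 4))
      - 2 * (1 - x ^ 2 / 3 + 2 / 45 * x ^ 4 - 1 / 315 * x ^ 6 + 2 / 14175 * x ^ 8)
        * (1 - (2 * x * Y + 4 / 3 * y ^ 2 + 6 * x ^ 6 / 5040 + x ^ 5 * Y + z ^ 2))
      - 2 / 315 * (x + y) ^ 6 - 4 / 315 * (x + y) ^ 4 * z ^ 2 := by
    linarith [hFQ, mul_nonneg (by linarith : (0 : ℝ) ≤
      2 * (1 - x ^ 2 / 3 + 2 / 45 * x ^ 4 - 1 / 315 * x ^ 6 + 2 / 14175 * x ^ 8) - 11 / 6) hE0]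
  have hkey0 : 2 / 315 * (x + y) ^ 8 ≤ ((x + y) ^ 2 - z ^ 2) *
      ((2 - 2 / 3 * ((x + y) ^ 2 + z ^ 2)
        + 4 / 45 * ((x + y) ^ 4 + (x + y) ^ 2 * z ^ 2 + z ^ 4))
      - 2 * (1 - x ^ 2 / 3 + 2 / 45 * x ^ 4 - 1 / 315 * x ^ 6 + 2 / 14175 * x ^ 8)
        * (1 - (2 * x * Y + 4 / 3 * y ^ 2 + 6 * x ^ 6 / 5040 + x ^ 5 * Y + z ^ 2))) := by
    linarith [mul_nonneg hSpos.le hbr,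
      mul_nonneg (mul_nonneg (mul_nonneg hA0 hA0) (mul_nonneg hA0 hA0))
        (mul_nonneg (sq_nonneg z) (by linarith : (0 : ℝ) ≤ (x + y) ^ 2 - 2 * z ^ 2))]
  linarith [hkey0]

set_option maxHeartbeats 1000000 in
theorem sin_sq_ratio_lower_bound (x y z : ℝ)
    (hpos : 0 < max |y| |z|) (hxy : max |y| |z| ≤ x) (hx : x < 1 / 2)
    (h1 : 2 * z ^ 2 ≤ (x + y) ^ 2)
    (h2 : ((x + y) ^ 2 - z ^ 2) / x ^ 2 ≥ 1 / 2) :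
    (Real.sin (x + y) ^ 2 - Real.sin z ^ 2) / Real.sin x ^ 2 ≥
      (((x + y) ^ 2 - z ^ 2) / x ^ 2) *
        (1 - (2 * x * |y| + (4 / 3) * y ^ 2 + 6 * x ^ 6 / 5040 + x ^ 5 * |y| + z ^ 2)) := by
  have hx0 : 0 < x := lt_of_lt_of_le hpos hxy
  have hxne : x ≠ 0 := ne_of_gt hx0
  have hy : |y| ≤ x := le_trans (le_max_left _ _) hxy
  have hzx : |z| ≤ x := le_trans (le_max_right _ _) hxy
  have hY0 : 0 ≤ |y| := abs_nonneg y
  have hYy : y ≤ |y| := le_abs_self y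
  have hYy' : -|y| ≤ y := neg_abs_le y
  have hzx2 : z ^ 2 ≤ x ^ 2 := by nlinarith [sq_abs z, abs_nonneg z]
  have hA0 : 0 ≤ x + y := by linarith
  have hA1 : x + y ≤ 1 := by linarith
  have hx2 : (0 : ℝ) < x ^ 2 := by positivity
  have hS : x ^ 2 / 2 ≤ (x + y) ^ 2 - z ^ 2 := by
    have h := (le_div_iff₀ hx2).mp h2
    linarith
  have hSpos : (0 : ℝ) < (x + y) ^ 2 - z ^ 2 := by linarith
  have e1 := Real.sin_sq_eq_half_sub (x + y)
  have e2 := Real.sin_sq_eq_half_sub z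
  have e3 := Real.sin_sq_eq_half_sub x
  have hsinx : 0 < Real.sin x :=
    Real.sin_pos_of_pos_of_lt_pi hx0 (by linarith [Real.pi_gt_three])
  have hden : 0 < Real.sin x ^ 2 := by positivity
  have hnum : (2 * ((x + y) ^ 2 - z ^ 2) - 2 / 3 * ((x + y) ^ 4 - z ^ 4)
      + 4 / 45 * ((x + y) ^ 6 - z ^ 6) - 2 / 315 * (x + y) ^ 8) / 2
      ≤ Real.sin (x + y) ^ 2 - Real.sin z ^ 2 := by
    have hz6 := c6' (2 * z)
    have ha8 := c8' (2 * (x + y))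
    rw [e1, e2]
    linarith [hz6, ha8]
  have hden2 : 2 * Real.sin x ^ 2 ≤ 2 * x ^ 2 - 2 / 3 * x ^ 4 + 4 / 45 * x ^ 6
      - 2 / 315 * x ^ 8 + 4 / 14175 * x ^ 10 := by
    have h10 := c10' (2 * x)
    rw [e3]
    linarith [h10]
  have hN0 := N_nonneg_aux x y z hx0 hx hA0 hA1 hzx2 h1 hSpos
  have hE0 : 0 ≤ 2 * x * |y| + (4 / 3) * y ^ 2 + 6 * x ^ 6 / 5040 + x ^ 5 * |y| + z ^ 2 := by
    have h1' : 0 ≤ 2 * x * |y| := by positivity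
    have h2' : 0 ≤ x ^ 5 * |y| := by positivity
    positivity
  rcases le_or_gt (1 - (2 * x * |y| + (4 / 3) * y ^ 2 + 6 * x ^ 6 / 5040
      + x ^ 5 * |y| + z ^ 2)) 0 with hE1 | hE1
  · have hr : (((x + y) ^ 2 - z ^ 2) / x ^ 2) * (1 - (2 * x * |y| + (4 / 3) * y ^ 2
        + 6 * x ^ 6 / 5040 + x ^ 5 * |y| + z ^ 2)) ≤ 0 :=
      mul_nonpos_of_nonneg_of_nonpos (div_nonneg hSpos.le hx2.le) hE1
    have hl : 0 ≤ (Real.sin (x + y) ^ 2 - Real.sin z ^ 2) / Real.sin x ^ 2 :=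
      div_nonneg (by linarith) hden.le
    linarith
  · have hRf : 0 ≤ (((x + y) ^ 2 - z ^ 2) / x ^ 2) * (1 - (2 * x * |y| + (4 / 3) * y ^ 2
        + 6 * x ^ 6 / 5040 + x ^ 5 * |y| + z ^ 2)) :=
      mul_nonneg (div_nonneg hSpos.le hx2.le) hE1.le
    have hkey' := key_poly_aux x y z |y| hx0 hx hY0 hYy hYy' hy hzx2 h1 hSpos (sq_abs y)
    have step : (((x + y) ^ 2 - z ^ 2) / x ^ 2) * (1 - (2 * x * |y| + (4 / 3) * y ^ 2
          + 6 * x ^ 6 / 5040 + x ^ 5 * |y| + z ^ 2)) * Real.sin x ^ 2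
        ≤ Real.sin (x + y) ^ 2 - Real.sin z ^ 2 := by
      calc (((x + y) ^ 2 - z ^ 2) / x ^ 2) * (1 - (2 * x * |y| + (4 / 3) * y ^ 2
            + 6 * x ^ 6 / 5040 + x ^ 5 * |y| + z ^ 2)) * Real.sin x ^ 2
          ≤ (((x + y) ^ 2 - z ^ 2) / x ^ 2) * (1 - (2 * x * |y| + (4 / 3) * y ^ 2
            + 6 * x ^ 6 / 5040 + x ^ 5 * |y| + z ^ 2)) * ((2 * x ^ 2 - 2 / 3 * x ^ 4
            + 4 / 45 * x ^ 6 - 2 / 315 * x ^ 8 + 4 / 14175 * x ^ 10) / 2) := by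
            apply mul_le_mul_of_nonneg_left _ hRf
            linarith [hden2]
        _ = ((x + y) ^ 2 - z ^ 2) * (1 - (2 * x * |y| + (4 / 3) * y ^ 2
            + 6 * x ^ 6 / 5040 + x ^ 5 * |y| + z ^ 2))
            * (1 - x ^ 2 / 3 + 2 / 45 * x ^ 4 - 1 / 315 * x ^ 6 + 2 / 14175 * x ^ 8) := by
            field_simp
            ring
        _ ≤ (2 * ((x + y) ^ 2 - z ^ 2) - 2 / 3 * ((x + y) ^ 4 - z ^ 4)
            + 4 / 45 * ((x + y) ^ 6 - z ^ 6) - 2 / 315 * (x + y) ^ 8) / 2 := by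
            linarith [hkey']
        _ ≤ Real.sin (x + y) ^ 2 - Real.sin z ^ 2 := hnum
    exact (le_div_iff₀ hden).mpr step
end

section
/- Let β = (−5 + √29)/2 = [0; 5, 5, 5, …] with convergent denominators q_0 = 1, q_1 = 5, q_{n+1} = 5q_n + q_{n−1}. Let n ≥ 2 and let N be an integer with q_n ≤ N < q_{n+1}, and let ∑_{i=0}^{n} b_{i+1} q_i be the Ostrowski expansion of q_{n+1} − (N+1) (possibly with leading zero coefficients). Then (q_{n+1} − 1)/N ≤ 27/(25 − (5·b_{n+1} + b_n)). -/
open Finset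

theorem ostrowski_ratio_bound
    (q : ℕ → ℕ) (h0 : q 0 = 1) (h1 : q 1 = 5)
    (hrec : ∀ m : ℕ, q (m + 2) = 5 * q (m + 1) + q m)
    (n : ℕ) (hn : 2 ≤ n) (N : ℕ) (hN1 : q n ≤ N) (hN2 : N < q (n + 1))
    (c : ℕ → ℕ)
    (hexp : q (n + 1) - (N + 1) = ∑ i ∈ Finset.range (n + 1), c (i + 1) * q i)
    (hc1 : c 1 < 5) (hci : ∀ i : ℕ, 2 ≤ i → c i ≤ 5)
    (hrule : ∀ i : ℕ, 2 ≤ i → c i = 5 → c (i - 1) = 0) :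
    ((q (n + 1) : ℝ) - 1) / N ≤
      27 / (25 - (5 * (c (n + 1) : ℝ) + (c n : ℝ))) := by
  obtain ⟨k, rfl⟩ : ∃ k, n = k + 2 := ⟨n - 2, by omega⟩
  have hq1 : ∀ m, 1 ≤ q m := by
    intro m
    induction m using Nat.twoStepInduction with
    | zero => omega
    | one => omega
    | more j ih1 ih2 => rw [hrec j]; omega
  -- tail bound: partial sums are less than the next q
  have tail : ∀ j, ∑ i ∈ Finset.range j, c (i + 1) * q i < q j := by
    intro j
    induction j using Nat.twoStepInduction with
    | zero => simpa [h0] using Nat.zero_lt_one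
    | one =>
      simp only [Finset.sum_range_one, Nat.zero_add, h0, h1, mul_one]
      exact hc1
    | more j ih1 ih2 =>
      rw [Finset.sum_range_succ]
      rcases Nat.lt_or_ge (c (j + 2)) 5 with h5 | h5
      · have hmul : c (j + 2) * q (j + 1) ≤ 4 * q (j + 1) :=
          Nat.mul_le_mul_right _ (by omega)
        rw [hrec j]
        have := hq1 j
        linarith
      · have hc5 : c (j + 2) = 5 := le_antisymm (hci _ (by omega)) h5
        have hz : c (j + 1) = 0 := by
          have := hrule (j + 2) (by omega) hc5
          simpa using this
        rw [Finset.sum_range_succ, hz, hc5, hrec j]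
        omega
  -- name the pieces
  have hidx : k + 2 + 1 = k + 3 := rfl
  simp only [hidx] at hexp hN2 ⊢
  have hS := tail (k + 1)
  have hsum : ∑ i ∈ Finset.range (k + 3), c (i + 1) * q i =
      (∑ i ∈ Finset.range (k + 1), c (i + 1) * q i)
        + c (k + 2) * q (k + 1) + c (k + 3) * q (k + 2) := by
    rw [Finset.sum_range_succ, Finset.sum_range_succ]
  rw [hsum] at hexp
  obtain ⟨S, hSdef⟩ : ∃ x, ∑ i ∈ Finset.range (k + 1), c (i + 1) * q i = x := ⟨_, rfl⟩
  obtain ⟨P2, hP2⟩ : ∃ x, c (k + 2) * q (k + 1) = x := ⟨_, rfl⟩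
  obtain ⟨P3, hP3⟩ : ∃ x, c (k + 3) * q (k + 2) = x := ⟨_, rfl⟩
  rw [hSdef, hP2, hP3] at hexp
  rw [hSdef] at hS
  have hq3 : q (k + 3) = 5 * q (k + 2) + q (k + 1) := hrec (k + 1)
  have hq2 : q (k + 2) = 5 * q (k + 1) + q k := hrec k
  have hq1k : 5 * q k ≤ q (k + 1) := by
    cases k with
    | zero => rw [h0, h1]
    | succ m => rw [hrec m]; omega
  have hA : S + P2 + P3 + (N + 1) = q (k + 3) := by omega
  have hc3le : c (k + 3) ≤ 5 := hci _ (by omega)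
  have hc2le : c (k + 2) ≤ 5 := hci _ (by omega)
  have hq1p := hq1 (k + 1)
  have hqk := hq1 k
  -- c (k+3) ≤ 4
  have hc3le4 : c (k + 3) ≤ 4 := by
    by_contra h
    have h5 : c (k + 3) = 5 := by omega
    rw [h5] at hP3
    omega
  -- 5 c(k+3) + c(k+2) ≤ 24
  have hD : 5 * c (k + 3) + c (k + 2) ≤ 24 := by
    by_contra h
    have h3 : c (k + 3) = 4 := by omega
    have h2 : c (k + 2) = 5 := by omega
    rw [h3] at hP3
    rw [h2] at hP2
    omega
  -- now over the reals
  have hNpos : (0 : ℝ) < N := by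
    have : 0 < N := by omega
    exact_mod_cast this
  have hDpos : (0 : ℝ) < 25 - (5 * (c (k + 3) : ℝ) + (c (k + 2) : ℝ)) := by
    have : (5 * (c (k + 3)) + c (k + 2) : ℝ) ≤ 24 := by exact_mod_cast hD
    linarith
  rw [div_le_div_iff₀ hNpos hDpos]
  have rA : (S : ℝ) + P2 + P3 + (N + 1) = (q (k + 3) : ℝ) := by exact_mod_cast hA
  have rP2 : ((c (k + 2) : ℝ)) * (q (k + 1) : ℝ) = P2 := by exact_mod_cast hP2
  have rP3 : ((c (k + 3) : ℝ)) * (q (k + 2) : ℝ) = P3 := by exact_mod_cast hP3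
  have rS : (S : ℝ) ≤ (q (k + 1) : ℝ) - 1 := by
    have : S + 1 ≤ q (k + 1) := hS
    have := (Nat.cast_le (α := ℝ)).2 this
    push_cast at this
    linarith
  have rB5A : 5 * (q (k + 1) : ℝ) ≤ (q (k + 2) : ℝ) := by
    have : 5 * q (k + 1) ≤ q (k + 2) := by omega
    exact_mod_cast this
  have r27 : (q (k + 3) : ℝ) ≤ 27 * (q (k + 1) : ℝ) := by
    have : q (k + 3) ≤ 27 * q (k + 1) := by omega
    exact_mod_cast this
  have rC3 : (c (k + 3) : ℝ) ≤ 5 := by exact_mod_cast hc3le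
  have rC2 : (0 : ℝ) ≤ (c (k + 2) : ℝ) := Nat.cast_nonneg _
  have rN : (q (k + 2) : ℝ) ≤ (N : ℝ) := by exact_mod_cast hN1
  have rApos : (1 : ℝ) ≤ (q (k + 1) : ℝ) := by exact_mod_cast hq1p
  have hq3r : (q (k + 3) : ℝ) = 5 * (q (k + 2) : ℝ) + (q (k + 1) : ℝ) := by
    exact_mod_cast hq3
  have hfac : (0 : ℝ) ≤ (5 - (c (k + 3) : ℝ)) * ((q (k + 2) : ℝ) - 5 * (q (k + 1) : ℝ)) :=
    mul_nonneg (by linarith) (by linarith)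
  have key : (25 - (5 * (c (k + 3) : ℝ) + (c (k + 2) : ℝ))) * (q (k + 1) : ℝ) ≤ (N : ℝ) := by
    nlinarith [hfac, rA, rP2, rP3, rS, hq3r]
  calc ((q (k + 3) : ℝ) - 1) * (25 - (5 * (c (k + 3) : ℝ) + (c (k + 2) : ℝ)))
      ≤ (27 * (q (k + 1) : ℝ)) * (25 - (5 * (c (k + 3) : ℝ) + (c (k + 2) : ℝ))) :=
        mul_le_mul_of_nonneg_right (by linarith) (le_of_lt hDpos)
    _ = 27 * ((25 - (5 * (c (k + 3) : ℝ) + (c (k + 2) : ℝ))) * (q (k + 1) : ℝ)) := by ring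
    _ ≤ 27 * (N : ℝ) := by linarith [key]
end

section
/- Let β be irrational with convergents p_k/q_k and write δ_k = ‖q_k β‖ (distance to the nearest integer). For any real ε and any k ≥ 1, the shifted Sudler product satisfies P_{q_k}(β, ε) = 2|sin(π(δ_k + ε/q_k))| · ∏_{n=1}^{q_k − 1} 2|sin(π(n p_k / q_k + (−1)^k ({n/q_k} − 1/2)δ_k + (−1)^k (2ε + q_k δ_k)/(2 q_k)))|, using β = p_k/q_k + (−1)^k δ_k / q_k. -/
open Real Finset

theorem shifted_sudler_decomposition
    (β : ℝ) (hβ : Irrational β) (k : ℕ) (hk : 1 ≤ k)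
    (pk : ℤ) (qk : ℕ) (hqk : 1 ≤ qk) (δ ε : ℝ)
    (hδ : δ = |(qk : ℝ) * β - round ((qk : ℝ) * β)|)
    (hconv : β = (pk : ℝ) / qk + (-1) ^ k * δ / qk) :
    ∏ r ∈ Finset.Icc 1 qk, 2 * |Real.sin (π * ((r : ℝ) * β + (-1) ^ k * ε / qk))| =
      2 * |Real.sin (π * (δ + ε / qk))| *
        ∏ n ∈ Finset.Icc 1 (qk - 1),
          2 * |Real.sin (π * ((n : ℝ) * pk / qk +
            (-1) ^ k * (Int.fract ((n : ℝ) / qk) - 1 / 2) * δ +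
            (-1) ^ k * (2 * ε + qk * δ) / (2 * qk)))| := by
  have hq0 : (qk : ℝ) ≠ 0 := by positivity
  have hsplit : Finset.Icc 1 qk = Finset.Icc 1 ((qk - 1) + 1) := by
    congr 1
    omega
  rw [hsplit, Finset.prod_Icc_succ_top (by omega), mul_comm]
  congr 1
  · -- top term
    have hqk1 : ((qk - 1 + 1 : ℕ) : ℝ) = (qk : ℝ) := by
      congr 1; omega
    rw [hqk1]
    have harg : (qk : ℝ) * β + (-1) ^ k * ε / qk
        = (-1) ^ k * (δ + ε / qk) + (pk : ℝ) * 1 := by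
      rw [hconv]; field_simp; ring
    rw [harg]
    have : π * ((-1) ^ k * (δ + ε / qk) + (pk : ℝ) * 1)
        = (-1) ^ k * (π * (δ + ε / qk)) + (pk : ℤ) * π := by
      push_cast; ring
    rw [this, Real.sin_add_int_mul_pi, abs_mul]
    have h1 : |((-1 : ℝ)) ^ pk| = 1 := by
      rcases Int.even_or_odd pk with h | h
      · rw [h.neg_one_zpow]; norm_num
      · rw [h.neg_one_zpow]; norm_num
    rw [h1, one_mul]
    rcases Nat.even_or_odd k with hke | hko
    · rw [hke.neg_one_pow]; norm_num
    · rw [hko.neg_one_pow]; norm_num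
  · -- remaining product
    apply Finset.prod_congr rfl
    intro n hn
    simp only [Finset.mem_Icc] at hn
    have hfr : Int.fract ((n : ℝ) / qk) = (n : ℝ) / qk := by
      apply Int.fract_eq_self.2
      constructor
      · positivity
      · rw [div_lt_one (by positivity)]
        exact_mod_cast (by omega : n < qk)
    rw [hfr, hconv]
    congr 3
    field_simp
    ring
end
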